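/- The survival function of DTSP(a,m,b,n) evaluated at integer points agrees with the survival function of the continuous TSP(a,m,b,n) distribution: for each integer y with a ≤ y ≤ b-1, S_DTSP(y) = S_TSP(y). -/

import Mathlib

open Finset

/-- The pmf of the discrete two-sided power distribution DTSP(a, m, b, n). -/
noncomputable def dtspPmf (a m b : ℤ) (n : ℝ) (y : ℤ) : ℝ :=
  if y < m then
    (((y - a + 1 : ℤ) : ℝ) ^ n - ((y - a : ℤ) : ℝ) ^ n) /
      (((b - a : ℤ) : ℝ) * ((m - a : ℤ) : ℝ) ^ (n - 1))
  else
    (((b - y : ℤ) : ℝ) ^ n - ((b - y - 1 : ℤ) : ℝ) ^ n) /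
      (((b - a : ℤ) : ℝ) * ((b - m : ℤ) : ℝ) ^ (n - 1))

/-- Survival function of the continuous TSP(a, m, b, n) distribution. -/
noncomputable def tspSurv (a m b : ℤ) (n : ℝ) (x : ℝ) : ℝ :=
  if x ≤ (m : ℝ) then
    1 - (((m : ℝ) - a) / ((b : ℝ) - a)) * ((x - a) / ((m : ℝ) - a)) ^ n
  else
    (((b : ℝ) - m) / ((b : ℝ) - a)) * (((b : ℝ) - x) / ((b : ℝ) - m)) ^ n

private theorem telescope' (f : ℤ → ℝ) (y c : ℤ) (h : y ≤ c) :
    ∑ t ∈ Finset.Ico y c, (f (t+1) - f t) = f c - f y := by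
  refine Int.le_induction
    (motive := fun c _ => ∑ t ∈ Finset.Ico y c, (f (t+1) - f t) = f c - f y) ?_ ?_ c h
  · simp
  · intro c hc ih
    have hins : Finset.Ico y (c+1) = insert c (Finset.Ico y c) := by
      ext t; simp only [Finset.mem_Ico, Finset.mem_insert]; omega
    rw [hins, Finset.sum_insert (by simp), ih]; ring

/-- The DTSP survival function agrees with the TSP survival function at integer points. -/
theorem dtsp_survival_eq_tsp_survival (a m b : ℤ) (n : ℝ)
    (ham : a < m) (hmb : m < b) (hn : 0 < n)
    (y : ℤ) (hay : a ≤ y) (hyb : y ≤ b - 1) :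
    ∑ t ∈ Finset.Icc y (b - 1), dtspPmf a m b n t = tspSurv a m b n (y : ℝ) := by
  have hB : (0:ℝ) < ((b - a : ℤ) : ℝ) := by exact_mod_cast (by omega : (0:ℤ) < b - a)
  have hM : (0:ℝ) < ((m - a : ℤ) : ℝ) := by exact_mod_cast (by omega : (0:ℤ) < m - a)
  have hC : (0:ℝ) < ((b - m : ℤ) : ℝ) := by exact_mod_cast (by omega : (0:ℤ) < b - m)
  have hMn : (0:ℝ) < ((m - a : ℤ) : ℝ) ^ n := Real.rpow_pos_of_pos hM n
  have hCn : (0:ℝ) < ((b - m : ℤ) : ℝ) ^ n := Real.rpow_pos_of_pos hC n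
  have hBMC : ((b - a : ℤ) : ℝ) = ((m - a : ℤ) : ℝ) + ((b - m : ℤ) : ℝ) := by
    push_cast; ring
  have hMn1 : ((m - a : ℤ) : ℝ) ^ (n-1) = ((m - a : ℤ) : ℝ) ^ n / ((m - a : ℤ) : ℝ) := by
    rw [Real.rpow_sub hM, Real.rpow_one]
  have hCn1 : ((b - m : ℤ) : ℝ) ^ (n-1) = ((b - m : ℤ) : ℝ) ^ n / ((b - m : ℤ) : ℝ) := by
    rw [Real.rpow_sub hC, Real.rpow_one]
  set g : ℤ → ℝ := fun t => ((t - a : ℤ) : ℝ) ^ n with hg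
  set h : ℤ → ℝ := fun t => -(((b - t : ℤ) : ℝ) ^ n) with hh
  -- right-hand telescoping sum
  have hright : ∀ z : ℤ, m ≤ z → z ≤ b →
      ∑ t ∈ Finset.Ico z b, dtspPmf a m b n t
        = ((b - z : ℤ) : ℝ) ^ n / (((b - a : ℤ) : ℝ) * ((b - m : ℤ) : ℝ) ^ (n - 1)) := by
    intro z hmz hzb
    have hcongr : ∀ t ∈ Finset.Ico z b, dtspPmf a m b n t
        = (h (t+1) - h t) / (((b - a : ℤ) : ℝ) * ((b - m : ℤ) : ℝ) ^ (n - 1)) := by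
      intro t ht
      rw [Finset.mem_Ico] at ht
      rw [dtspPmf, if_neg (by omega)]
      have h1 : (b - t - 1 : ℤ) = (b - (t+1) : ℤ) := by ring
      rw [h1, hh]
      ring_nf
    rw [Finset.sum_congr rfl hcongr, ← Finset.sum_div, telescope' h z b hzb]
    have hz0 : ((b - b : ℤ) : ℝ) = 0 := by push_cast; ring
    simp only [hh, hz0, Real.zero_rpow (ne_of_gt hn), neg_zero, zero_sub, neg_neg]
  -- left-hand telescoping sum
  have hleft : ∀ z : ℤ, a ≤ z → z ≤ m →
      ∑ t ∈ Finset.Ico z m, dtspPmf a m b n t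
        = (((m - a : ℤ) : ℝ) ^ n - ((z - a : ℤ) : ℝ) ^ n)
            / (((b - a : ℤ) : ℝ) * ((m - a : ℤ) : ℝ) ^ (n - 1)) := by
    intro z hz hzm
    have hcongr : ∀ t ∈ Finset.Ico z m, dtspPmf a m b n t
        = (g (t+1) - g t) / (((b - a : ℤ) : ℝ) * ((m - a : ℤ) : ℝ) ^ (n - 1)) := by
      intro t ht
      rw [Finset.mem_Ico] at ht
      rw [dtspPmf, if_pos (by omega)]
      have h1 : (t - a + 1 : ℤ) = (t + 1 - a : ℤ) := by ring
      rw [h1, hg]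
    rw [Finset.sum_congr rfl hcongr, ← Finset.sum_div, telescope' g z m hzm, hg]
  have hIcc : Finset.Icc y (b-1) = Finset.Ico y b := by
    ext t; simp only [Finset.mem_Icc, Finset.mem_Ico]; omega
  rw [hIcc]
  rcases lt_or_ge y m with hym | hmy
  · -- y < m
    rw [← Finset.Ico_union_Ico_eq_Ico (le_of_lt hym) (le_of_lt hmb),
      Finset.sum_union (Finset.Ico_disjoint_Ico_consecutive y m b),
      hleft y hay hym.le, hright m le_rfl hmb.le, tspSurv,
      if_pos (by exact_mod_cast hym.le)]
    have hY : (0:ℝ) ≤ ((y - a : ℤ) : ℝ) := by exact_mod_cast (by omega : (0:ℤ) ≤ y - a)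
    have hcast1 : ((y:ℝ) - a) = ((y - a : ℤ) : ℝ) := by push_cast; ring
    have hcast2 : ((m:ℝ) - a) = ((m - a : ℤ) : ℝ) := by push_cast; ring
    have hcast3 : ((b:ℝ) - a) = ((b - a : ℤ) : ℝ) := by push_cast; ring
    rw [hcast1, hcast2, hcast3, Real.div_rpow hY hM.le, hMn1, hCn1]
    have hB0 : ((b:ℝ) - (a:ℝ)) ≠ 0 := by rw [hcast3]; exact ne_of_gt hB
    have hM0 : ((m:ℝ) - (a:ℝ)) ≠ 0 := by rw [hcast2]; exact ne_of_gt hM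
    have hC0 : ((b:ℝ) - (m:ℝ)) ≠ 0 := by
      have : ((b:ℝ) - m) = ((b - m : ℤ) : ℝ) := by push_cast; ring
      rw [this]; exact ne_of_gt hC
    have hMn0 : ((m:ℝ) - (a:ℝ)) ^ n ≠ 0 := by rw [hcast2]; exact ne_of_gt hMn
    have hCn0 : ((b:ℝ) - (m:ℝ)) ^ n ≠ 0 := by
      have : ((b:ℝ) - m) = ((b - m : ℤ) : ℝ) := by push_cast; ring
      rw [this]; exact ne_of_gt hCn
    field_simp
    push_cast; ring
  · -- m ≤ y
    rw [hright y hmy (by omega)]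
    rcases eq_or_lt_of_le hmy with hym | hym
    · rw [tspSurv, if_pos (by exact_mod_cast hym.ge)]
      have hmy' : ((y:ℝ) - a) / ((m:ℝ) - a) = 1 := by
        rw [show ((m:ℝ)) = (y:ℝ) by exact_mod_cast hym]
        exact div_self (by
          have : (0:ℝ) < (y:ℝ) - a := by exact_mod_cast (by omega : (0:ℤ) < y - a)
          exact ne_of_gt this)
      rw [hmy', Real.one_rpow, mul_one,
        show (b - y : ℤ) = (b - m : ℤ) by omega, hCn1]
      have hcast2 : ((m:ℝ) - a) = ((m - a : ℤ) : ℝ) := by push_cast; ring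
      have hcast3 : ((b:ℝ) - a) = ((b - a : ℤ) : ℝ) := by push_cast; ring
      rw [hcast2, hcast3]
      have hB0 : ((b:ℝ) - (a:ℝ)) ≠ 0 := by rw [hcast3]; exact ne_of_gt hB
      have hC0 : ((b:ℝ) - (m:ℝ)) ≠ 0 := by
        have : ((b:ℝ) - m) = ((b - m : ℤ) : ℝ) := by push_cast; ring
        rw [this]; exact ne_of_gt hC
      have hCn0 : ((b:ℝ) - (m:ℝ)) ^ n ≠ 0 := by
        have : ((b:ℝ) - m) = ((b - m : ℤ) : ℝ) := by push_cast; ring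
        rw [this]; exact ne_of_gt hCn
      field_simp
      push_cast; ring
    · rw [tspSurv, if_neg (by push_cast; exact not_le.2 (by exact_mod_cast hym))]
      have hBY : (0:ℝ) ≤ ((b:ℝ) - y) := by
        have : y ≤ b := by omega
        exact sub_nonneg.2 (by exact_mod_cast this)
      have hcast2 : ((b:ℝ) - m) = ((b - m : ℤ) : ℝ) := by push_cast; ring
      have hcast3 : ((b:ℝ) - a) = ((b - a : ℤ) : ℝ) := by push_cast; ring
      have hcast4 : ((b:ℝ) - y) = ((b - y : ℤ) : ℝ) := by push_cast; ring
      rw [hcast2, hcast3, hcast4, Real.div_rpow (hcast4 ▸ hBY) hC.le, hCn1]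
      have hB0 : ((b:ℝ) - (a:ℝ)) ≠ 0 := by rw [hcast3]; exact ne_of_gt hB
      have hC0 : ((b:ℝ) - (m:ℝ)) ≠ 0 := by rw [hcast2]; exact ne_of_gt hC
      have hCn0 : ((b:ℝ) - (m:ℝ)) ^ n ≠ 0 := by rw [hcast2]; exact ne_of_gt hCn
      field_simp
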